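/- For all real x ≤ 0, all r ≥ 0 and all θ ∈ [3π/4, 5π/4], one has |erfc(x + r·e^{iθ})| ≥ erfc(x). -/

import Mathlib

open MeasureTheory Real

/-- Real complementary error function. -/
noncomputable def erfc (x : ℝ) : ℝ :=
  (2 / Real.sqrt π) * ∫ t in Set.Ioi x, Real.exp (-t ^ 2)

/-- Complex complementary error function, via a horizontal path from `z` to `+∞`
(path-independent since the integrand is entire and rapidly decaying). -/
noncomputable def cerfc (z : ℂ) : ℂ :=
  (2 / Real.sqrt π : ℝ) * ∫ t in Set.Ioi (0 : ℝ), Complex.exp (-(z + (t : ℂ)) ^ 2)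

lemma shift_Ioi {E : Type*} [NormedAddCommGroup E] [NormedSpace ℝ E]
    (g : ℝ → E) (a c : ℝ) :
    ∫ t in Set.Ioi a, g (t + c) = ∫ u in Set.Ioi (a + c), g u := by
  rw [← integral_indicator measurableSet_Ioi, ← integral_indicator measurableSet_Ioi,
    ← integral_add_right_eq_self ((Set.Ioi (a+c)).indicator g) c]
  congr 1; ext t
  simp only [Set.indicator, Set.mem_Ioi]
  by_cases h : a < t
  · rw [if_pos h, if_pos (by linarith)]
  · rw [if_neg h, if_neg (by intro hh; exact h (by linarith))]

lemma shift_Iic {E : Type*} [NormedAddCommGroup E] [NormedSpace ℝ E]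
    (g : ℝ → E) (a c : ℝ) :
    ∫ t in Set.Iic a, g (t + c) = ∫ u in Set.Iic (a + c), g u := by
  rw [← integral_indicator measurableSet_Iic, ← integral_indicator measurableSet_Iic,
    ← integral_add_right_eq_self ((Set.Iic (a+c)).indicator g) c]
  congr 1; ext t
  simp only [Set.indicator, Set.mem_Iic]
  by_cases h : t ≤ a
  · rw [if_pos h, if_pos (by linarith)]
  · rw [if_neg h, if_neg (by intro hh; exact h (by linarith))]

theorem abs_cerfc_ge (x r θ : ℝ) (hx : x ≤ 0) (hr : 0 ≤ r)
    (hθ : θ ∈ Set.Icc (3 * π / 4) (5 * π / 4)) :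
    erfc x ≤ ‖cerfc ((x : ℂ) + (r : ℂ) * Complex.exp (θ * Complex.I))‖ := by
  obtain ⟨hθ1, hθ2⟩ := hθ
  have hπ := Real.pi_pos
  -- sector facts
  have hcos : Real.cos θ ≤ 0 :=
    Real.cos_nonpos_of_pi_div_two_le_of_le (by linarith) (by linarith)
  have hcos2 : 0 ≤ Real.cos (2 * θ) := by
    rw [← Real.cos_sub_two_pi]
    exact Real.cos_nonneg_of_mem_Icc ⟨by linarith, by linarith⟩
  have hsq : Real.sin θ ^ 2 ≤ Real.cos θ ^ 2 := by
    nlinarith [Real.cos_two_mul θ, Real.sin_sq_add_cos_sq θ]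
  set X : ℝ := x + r * Real.cos θ with hX
  set b : ℝ := r * Real.sin θ with hb
  set d : ℝ := -(r * Real.cos θ) with hd
  have hd0 : 0 ≤ d := by nlinarith
  have hb2d2 : b ^ 2 ≤ d ^ 2 := by
    have h := mul_le_mul_of_nonneg_left hsq (sq_nonneg r)
    simp only [hb, hd, neg_sq]
    nlinarith [h]
  have hXxd : X = x - d := by simp [hX, hd]
  -- the complex integrand along the shifted horizontal line
  set g : ℝ → ℂ := fun u => Complex.exp (-((u:ℂ) + b*Complex.I)^2) with hgdef
  have hg_int : Integrable g := by
    have := GaussianFourier.integrable_cexp_neg_mul_sq_add_real_mul_I (b := 1) (by simp) b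
    simpa [hgdef] using this
  have hg_sum : ∫ u : ℝ, g u = (Real.sqrt π : ℂ) := by
    have h := GaussianFourier.integral_cexp_neg_mul_sq_add_real_mul_I (b := 1) (by simp) b
    simp only [neg_one_mul, div_one] at h
    simp only [hgdef]
    rw [h, show (1/2 : ℂ) = ((1/2 : ℝ) : ℂ) by norm_num,
      ← Complex.ofReal_cpow Real.pi_pos.le, Real.sqrt_eq_rpow]
  set f : ℝ → ℝ := fun u => (g u).re with hfdef
  have hf_int : Integrable f := by
    have := hg_int.re
    simpa [hfdef] using this
  have hf_sum : ∫ u : ℝ, f u = Real.sqrt π := by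
    have := integral_re hg_int
    simp only [RCLike.re_to_complex] at this
    rw [hfdef]
    simp only []
    rw [this, hg_sum, Complex.ofReal_re]
  -- rewrite the argument of cerfc
  have hz : (x : ℂ) + (r : ℂ) * Complex.exp (θ * Complex.I)
      = ((X : ℝ) : ℂ) + (b : ℝ) * Complex.I := by
    rw [Complex.exp_mul_I]
    push_cast [hX, hb]
    ring
  -- express the real part of cerfc as an integral of f over Ioi X
  have hre : (cerfc ((x : ℂ) + (r : ℂ) * Complex.exp (θ * Complex.I))).re
      = (2 / Real.sqrt π) * ∫ u in Set.Ioi X, f u := by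
    rw [hz, cerfc]
    have hptw : ∀ t : ℝ, Complex.exp (-((((X : ℝ) : ℂ) + (b : ℝ) * Complex.I) + (t : ℂ))^2)
        = g (t + X) := by
      intro t
      simp only [hgdef]
      push_cast
      ring_nf
    rw [show (∫ t in Set.Ioi (0:ℝ),
          Complex.exp (-((((X : ℝ) : ℂ) + (b : ℝ) * Complex.I) + (t : ℂ))^2))
        = ∫ t in Set.Ioi (0:ℝ), g (t + X) from integral_congr_ae (Filter.Eventually.of_forall hptw)]
    rw [shift_Ioi g 0 X, zero_add]
    rw [Complex.re_ofReal_mul]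
    congr 1
    have := integral_re (μ := volume.restrict (Set.Ioi X)) hg_int.restrict
    simp only [RCLike.re_to_complex] at this
    rw [← this]
  -- basic integrabilities
  have hgauss_int : Integrable (fun t : ℝ => Real.exp (-t^2)) := by
    have := integrable_exp_neg_mul_sq (b := (1:ℝ)) one_pos
    simpa using this
  have hshift_int : Integrable (fun u : ℝ => Real.exp (-(u + d)^2)) :=
    hgauss_int.comp_add_right d
  -- pointwise bound on Iic X
  have hptbd : ∀ u ∈ Set.Iic X, f u ≤ Real.exp (-(u + d)^2) := by
    intro u hu
    have h1 : f u ≤ Real.exp ((-((u:ℂ) + b*Complex.I)^2).re) := by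
      calc f u ≤ ‖g u‖ := Complex.re_le_norm _
        _ = _ := by rw [hgdef]; exact Complex.norm_exp _
    have h2 : (-((u:ℂ) + b*Complex.I)^2).re = b^2 - u^2 := by
      simp [pow_two, Complex.mul_re, Complex.add_re, Complex.add_im]
      try ring
    rw [h2] at h1
    refine h1.trans (Real.exp_le_exp.mpr ?_)
    have hu' : u ≤ -d := by
      simp only [Set.mem_Iic] at hu
      linarith [hXxd ▸ hu]
    nlinarith
  -- compare the Iic parts
  have hIic : ∫ u in Set.Iic X, f u ≤ ∫ t in Set.Iic x, Real.exp (-t^2) := by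
    calc ∫ u in Set.Iic X, f u ≤ ∫ u in Set.Iic X, Real.exp (-(u + d)^2) := by
          apply setIntegral_mono_on hf_int.integrableOn hshift_int.integrableOn
            measurableSet_Iic hptbd
      _ = ∫ t in Set.Iic (X + d), Real.exp (-t^2) :=
          shift_Iic (fun t => Real.exp (-t^2)) X d
      _ = ∫ t in Set.Iic x, Real.exp (-t^2) := by rw [hXxd]; ring_nf
  -- total mass splittings
  have hsplit_f : (∫ u in Set.Iic X, f u) + (∫ u in Set.Ioi X, f u) = Real.sqrt π := by
    rw [intervalIntegral.integral_Iic_add_Ioi hf_int.integrableOn hf_int.integrableOn, hf_sum]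
  have hsplit_e : (∫ t in Set.Iic x, Real.exp (-t^2)) + (∫ t in Set.Ioi x, Real.exp (-t^2))
      = Real.sqrt π := by
    rw [intervalIntegral.integral_Iic_add_Ioi hgauss_int.integrableOn hgauss_int.integrableOn]
    have := integral_gaussian (1:ℝ)
    simpa using this
  have hmain : ∫ t in Set.Ioi x, Real.exp (-t^2) ≤ ∫ u in Set.Ioi X, f u := by linarith
  -- conclude
  calc erfc x = (2 / Real.sqrt π) * ∫ t in Set.Ioi x, Real.exp (-t^2) := rfl
    _ ≤ (2 / Real.sqrt π) * ∫ u in Set.Ioi X, f u := by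
        apply mul_le_mul_of_nonneg_left hmain
        positivity
    _ = (cerfc ((x : ℂ) + (r : ℂ) * Complex.exp (θ * Complex.I))).re := hre.symm
    _ ≤ ‖cerfc ((x : ℂ) + (r : ℂ) * Complex.exp (θ * Complex.I))‖ :=
        Complex.re_le_norm _
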